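/- Let Γ act freely on a set X, let g be in the commensurator of Γ with coset representatives δ_i (Γ = ⊔_{i=1}^d δ_i Γ_{g^{-1}}), and form the fiber product X ×_{τ_g} M_g = {(x, m) ∈ X × M_g : π(x) = τ_g(m)}, where M_g = X/Γ_g, π : X → X/Γ is the quotient map and τ_g : M_g → X/Γ is induced by x ↦ π(xg). Then the maps φ_i : X → X ×_{τ_g} M_g, x ↦ (x g δ_i^{-1}, [x]), for i = 1,…,d, are injective, have pairwise disjoint images, and their images cover X ×_{τ_g} M_g; hence they assemble to a bijection ⊔_{i=1}^d X → X ×_{τ_g} M_g. -/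
import Mathlib


/-- For a free right action of `Γ` on `X`, `g` in the commensurator with coset
representatives `Γ = ⊔ᵢ δᵢ Γ_{g⁻¹}`, the maps `φᵢ : X → X ×_{τ_g} M_g`,
`x ↦ (x g δᵢ⁻¹, [x])` are well defined (land in the fiber product), injective with
pairwise disjoint images, and jointly surjective: they assemble to a bijection
`⊔ᵢ X → X ×_{τ_g} M_g`.  Here `M = X/Γ` and `M_g = X/Γ_g` are realized as quotients
by the orbit relations. -/
theorem stmt_18 {X : Type*} {G : Type*} [Group G] (act : X → G → X)
    (hact1 : ∀ x, act x 1 = x) (hactm : ∀ x a b, act (act x a) b = act x (a * b))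
    (Γ : Subgroup G)
    (hfree : ∀ x : X, ∀ γ ∈ Γ, act x γ = x → γ = 1)
    (g : G) (d : ℕ) (δ : Fin d → G) (hδ : ∀ i, δ i ∈ Γ)
    (hcoset : ∀ γ ∈ Γ, ∃! i : Fin d,
      (δ i)⁻¹ * γ ∈ Γ ∧ g * ((δ i)⁻¹ * γ) * g⁻¹ ∈ Γ) :
    -- the maps land in the fiber product: `π(x g δᵢ⁻¹) = τ_g([x]) = π(x g)`
    (∀ (i : Fin d) (x : X),
        Quot.mk (fun a b : X => ∃ γ ∈ Γ, act a γ = b) (act x (g * (δ i)⁻¹)) =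
          Quot.mk (fun a b : X => ∃ γ ∈ Γ, act a γ = b) (act x g)) ∧
    -- the assembled map on `⊔ᵢ X = Fin d × X` is injective
    Function.Injective (fun q : Fin d × X =>
        (act q.2 (g * (δ q.1)⁻¹),
          Quot.mk (fun a b : X => ∃ γ, (γ ∈ Γ ∧ g⁻¹ * γ * g ∈ Γ) ∧ act a γ = b) q.2)) ∧
    -- and surjective onto the fiber product
    (∀ x' y : X,
        Quot.mk (fun a b : X => ∃ γ ∈ Γ, act a γ = b) x' =
          Quot.mk (fun a b : X => ∃ γ ∈ Γ, act a γ = b) (act y g) →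
        ∃ (i : Fin d) (x : X), act x (g * (δ i)⁻¹) = x' ∧
          Quot.mk (fun a b : X => ∃ γ, (γ ∈ Γ ∧ g⁻¹ * γ * g ∈ Γ) ∧ act a γ = b) x =
            Quot.mk (fun a b : X => ∃ γ, (γ ∈ Γ ∧ g⁻¹ * γ * g ∈ Γ) ∧ act a γ = b) y) := by
  set r1 : X → X → Prop := fun a b : X => ∃ γ ∈ Γ, act a γ = b with hr1
  set r2 : X → X → Prop :=
    fun a b : X => ∃ γ, (γ ∈ Γ ∧ g⁻¹ * γ * g ∈ Γ) ∧ act a γ = b with hr2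
  have he1 : Equivalence r1 := by
    constructor
    · intro a; exact ⟨1, Γ.one_mem, hact1 a⟩
    · rintro a b ⟨γ, hγ, rfl⟩
      exact ⟨γ⁻¹, Γ.inv_mem hγ, by rw [hactm, mul_inv_cancel, hact1]⟩
    · rintro a b c ⟨γ, hγ, rfl⟩ ⟨γ', hγ', rfl⟩
      exact ⟨γ * γ', Γ.mul_mem hγ hγ', (hactm a γ γ').symm⟩
  have he2 : Equivalence r2 := by
    constructor
    · intro a; exact ⟨1, ⟨Γ.one_mem, by simpa using Γ.one_mem⟩, hact1 a⟩
    · rintro a b ⟨γ, ⟨hγ, hγ'⟩, rfl⟩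
      refine ⟨γ⁻¹, ⟨Γ.inv_mem hγ, ?_⟩, by rw [hactm, mul_inv_cancel, hact1]⟩
      have := Γ.inv_mem hγ'
      simpa [mul_assoc] using this
    · rintro a b c ⟨γ, ⟨hγ, hγ'⟩, rfl⟩ ⟨η, ⟨hη, hη'⟩, rfl⟩
      refine ⟨γ * η, ⟨Γ.mul_mem hγ hη, ?_⟩, (hactm a γ η).symm⟩
      have := Γ.mul_mem hγ' hη'
      have e : (g⁻¹ * γ * g) * (g⁻¹ * η * g) = g⁻¹ * (γ * η) * g := by group
      rwa [e] at this
  have hq1 : ∀ a b : X, Quot.mk r1 a = Quot.mk r1 b → r1 a b := by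
    intro a b h
    exact he1.eqvGen_iff.mp (Quot.eq.mp h)
  have hq2 : ∀ a b : X, Quot.mk r2 a = Quot.mk r2 b → r2 a b := by
    intro a b h
    exact he2.eqvGen_iff.mp (Quot.eq.mp h)
  refine ⟨?_, ?_, ?_⟩
  · -- well-definedness
    intro i x
    apply Quot.sound
    exact ⟨δ i, hδ i, by rw [hactm]; congr 1; group⟩
  · -- injectivity
    rintro ⟨i, x⟩ ⟨j, y⟩ h
    simp only [Prod.mk.injEq] at h
    obtain ⟨h1, h2⟩ := h
    obtain ⟨γ, ⟨hγ, hγ'⟩, hxy⟩ := hq2 _ _ h2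
    -- act x (g δᵢ⁻¹) = act y (g δⱼ⁻¹) = act x (γ g δⱼ⁻¹)
    have key : act (act x (g * (δ i)⁻¹)) (δ i * (g⁻¹ * γ * g) * (δ j)⁻¹)
        = act x (g * (δ i)⁻¹) := by
      rw [hactm, h1, ← hxy, hactm]
      congr 1
      group
    have hmem : δ i * (g⁻¹ * γ * g) * (δ j)⁻¹ ∈ Γ :=
      Γ.mul_mem (Γ.mul_mem (hδ i) hγ') (Γ.inv_mem (hδ j))
    have hone := hfree _ _ hmem key
    -- so g⁻¹ γ g = δᵢ⁻¹ δⱼ, hence g (δᵢ⁻¹ δⱼ) g⁻¹ = γ ∈ Γ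
    have h3 : δ i * (g⁻¹ * γ * g) = δ j := mul_inv_eq_one.mp hone
    have hval : g⁻¹ * γ * g = (δ i)⁻¹ * δ j := by rw [← h3]; group
    obtain ⟨i₀, _, huniq⟩ := hcoset (δ j) (hδ j)
    have hii : i = i₀ := by
      apply huniq
      refine ⟨by rw [← hval]; exact hγ', ?_⟩
      have e : g * ((δ i)⁻¹ * δ j) * g⁻¹ = g * (g⁻¹ * γ * g) * g⁻¹ := by rw [hval]
      have e2 : g * (g⁻¹ * γ * g) * g⁻¹ = γ := by group
      rw [e, e2]; exact hγ
    have hjj : j = i₀ := by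
      apply huniq
      constructor
      · simpa using Γ.one_mem
      · simpa using Γ.one_mem
    have hij : i = j := hii.trans hjj.symm
    subst hij
    have h4 : g⁻¹ * γ * g = 1 := mul_left_cancel (a := δ i) (by rw [h3, mul_one])
    have hγ1 : γ = 1 := by
      have e : γ = g * (g⁻¹ * γ * g) * g⁻¹ := by group
      rw [e, h4]; group
    have hxy' : x = y := by rw [← hxy, hγ1, hact1]
    rw [hxy']
  · -- surjectivity
    intro x' y h
    obtain ⟨γ, hγ, hx'⟩ := hq1 _ _ h
    obtain ⟨i, ⟨hi1, hi2⟩, _⟩ := hcoset γ hγ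
    refine ⟨i, act y (g * γ⁻¹ * δ i * g⁻¹), ?_, ?_⟩
    · rw [hactm]
      have e : g * γ⁻¹ * δ i * g⁻¹ * (g * (δ i)⁻¹) = g * γ⁻¹ := by group
      rw [e]
      -- x' = act y (g γ⁻¹)
      have : act x' (γ * γ⁻¹) = act (act y g) γ⁻¹ := by
        rw [← hactm, hx', hactm]
      rw [mul_inv_cancel, hact1, hactm] at this
      exact this.symm
    · apply Quot.sound
      refine ⟨(g * γ⁻¹ * δ i * g⁻¹)⁻¹, ⟨?_, ?_⟩, ?_⟩
      · have : (g * ((δ i)⁻¹ * γ) * g⁻¹) ∈ Γ := hi2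
        have e : (g * γ⁻¹ * δ i * g⁻¹)⁻¹ = g * ((δ i)⁻¹ * γ) * g⁻¹ := by group
        rwa [e]
      · have : ((δ i)⁻¹ * γ)⁻¹ ∈ Γ := Γ.inv_mem hi1
        have e : g⁻¹ * (g * γ⁻¹ * δ i * g⁻¹)⁻¹ * g = ((δ i)⁻¹ * γ)⁻¹⁻¹ := by group
        rw [e]
        exact Γ.inv_mem this
      · rw [hactm, mul_inv_cancel, hact1]
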